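/- Let T be a rooted tree with n = |N(T)| nodes, let i ∈ N(T), and let C ∈ Trimmed(T) with i ∈ C. Then the number of permutations π of N(T) such that C_i^π ∪ {i} ∈ SameTrim(C,T) equals n! · |adj(C,T)|! · (|C|−1)! / |C ∪ adj(C,T)|!. -/

import Mathlib

open scoped Classical

/-- A rooted tree on a finite node set `V`, given by a parent map that fixes the
root and eventually maps every node to the root. -/
structure ReferralTree (V : Type*) [Fintype V] [DecidableEq V] where
  parent : V → V
  root : V
  parent_root : parent root = root
  reaches_root : ∀ v : V, ∃ k : ℕ, parent^[k] v = root

namespace ReferralTree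

variable {V : Type*} [Fintype V] [DecidableEq V]

/-- `anc T i` : the set of ancestors of `i` (nodes on the path from `i` to the
root, excluding `i` itself). -/
noncomputable def anc (T : ReferralTree V) (i : V) : Finset V :=
  Finset.univ.filter (fun j => j ≠ i ∧ ∃ k : ℕ, T.parent^[k] i = j)

/-- `trimN T C` : the node set of the trimmed induced subgraph `T^C_trim`,
i.e. `{i ∈ C : anc(i,T) ⊆ C}`. -/
noncomputable def trimN (T : ReferralTree V) (C : Finset V) : Finset V :=
  C.filter (fun i => T.anc i ⊆ C)

/-- `C` induces a trimmed subgraph: `N(T^C_trim) = C`. -/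
def Trimmed (T : ReferralTree V) (C : Finset V) : Prop :=
  T.trimN C = C

/-- `sameTrim T C` : the coalitions whose trimmed induced subgraph coincides
with that of `C`. -/
noncomputable def sameTrim (T : ReferralTree V) (C : Finset V) : Finset (Finset V) :=
  Finset.univ.filter (fun C' => T.trimN C' = T.trimN C)

/-- Adjacency in the tree `T` (the parent relation, symmetrised). -/
def Adj (T : ReferralTree V) (i j : V) : Prop :=
  i ≠ j ∧ (T.parent i = j ∨ T.parent j = i)

/-- `adjSet T C` : the nodes outside `C` adjacent in `T` to some node of `C`. -/
noncomputable def adjSet (T : ReferralTree V) (C : Finset V) : Finset V :=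
  Finset.univ.filter (fun i => i ∉ C ∧ ∃ j ∈ C, T.Adj i j)

/-- `subtree T i` : the node set `N(T_i)` of the subtree of `T` rooted at `i`,
i.e. `i` together with its descendants. -/
noncomputable def subtree (T : ReferralTree V) (i : V) : Finset V :=
  Finset.univ.filter (fun j => j = i ∨ i ∈ T.anc j)

/-- The depth of a node: the number of its ancestors. -/
noncomputable def depth (T : ReferralTree V) (i : V) : ℕ :=
  (T.anc i).card

/-- Given an ordering `π` of the nodes (a bijection with `Fin n`), the set
`C_i^π` of nodes preceding `i` in `π`. -/
noncomputable def precSet (π : V ≃ Fin (Fintype.card V)) (i : V) : Finset V :=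
  Finset.univ.filter (fun j => π j < π i)

/-- The characteristic function of the tree game `(T,f)`:
`v(C) = f(N(T^C_trim))`. -/
noncomputable def gameValue (T : ReferralTree V) (f : Finset V → ℝ) (C : Finset V) : ℝ :=
  f (T.trimN C)

/-- The marginal contribution `mc(i,C) = v(C ∪ {i}) − v(C)` in the tree game
`(T,f)`. -/
noncomputable def mc (T : ReferralTree V) (f : Finset V → ℝ) (i : V) (C : Finset V) : ℝ :=
  T.gameValue f (insert i C) - T.gameValue f C

/-- The Shapley value of player `i` in the tree game `(T,f)`:
`Sh_i = (1/n!) Σ_π mc(i, C_i^π)`. -/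
noncomputable def shapley (T : ReferralTree V) (f : Finset V → ℝ) (i : V) : ℝ :=
  (1 / ((Fintype.card V).factorial : ℝ)) *
    ∑ π : V ≃ Fin (Fintype.card V), T.mc f i (precSet π i)

/-- The characteristic function `f` of a basic tree game: `f(C) = |C|`. -/
noncomputable def basicF : Finset V → ℝ := fun C => (C.card : ℝ)

end ReferralTree

open ReferralTree


section Stmt6AuxSection
open Finset
set_option linter.unusedSectionVars false



namespace Stmt6Aux

variable {V : Type*} [Fintype V] [DecidableEq V]

/-- Uniqueness of an equiv to `Fin m` inducing a given strict order. -/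
lemma order_unique {γ : Type*} {m : ℕ} (q q' : γ ≃ Fin m)
    (h : ∀ x y, q x < q y ↔ q' x < q' y) : q = q' := by
  have hw : StrictMono (fun s : Fin m => q' (q.symm s)) := by
    intro s t hst
    rw [← h]
    simpa using hst
  have hrange : Set.range (fun s : Fin m => q' (q.symm s)) = Set.range (id : Fin m → Fin m) := by
    rw [Set.range_id]
    exact (q'.surjective.comp q.symm.surjective).range_eq
  haveI : WellFoundedLT (Fin m) := inferInstance
  have hfun : (fun s : Fin m => q' (q.symm s)) = (id : Fin m → Fin m) :=
    (StrictMono.range_inj (β := Fin m) (γ := Fin m) hw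
      (strictMono_id : StrictMono (id : Fin m → Fin m))).1 hrange
  ext x
  have := congrFun hfun (q x)
  simp only [Equiv.symm_apply_apply, id] at this
  exact this ▸ rfl

/-- The relative order of `π` on the finset `M`. -/
noncomputable def rmap (M : Finset V) (π : V ≃ Fin (Fintype.card V)) :
    {x // x ∈ M} ≃ Fin M.card :=
  Equiv.ofBijective
    (fun x => ((M.image π).orderIsoOfFin (Finset.card_image_of_injective M π.injective)).symm
      ⟨π x.1, Finset.mem_image_of_mem π x.2⟩)
    (by
      constructor
      · intro x y hxy
        have := congrArg ((M.image ⇑π).orderIsoOfFin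
          (Finset.card_image_of_injective M π.injective)) hxy
        simp only [OrderIso.apply_symm_apply] at this
        exact Subtype.ext (π.injective (Subtype.ext_iff.1 this))
      · intro j
        set oIso := (M.image ⇑π).orderIsoOfFin (Finset.card_image_of_injective M π.injective)
        obtain ⟨x, hx, hπx⟩ := Finset.mem_image.1 (oIso j).2
        refine ⟨⟨x, hx⟩, ?_⟩
        show oIso.symm ⟨π x, Finset.mem_image_of_mem ⇑π hx⟩ = j
        have : (⟨π x, Finset.mem_image_of_mem ⇑π hx⟩ : {y // y ∈ M.image ⇑π}) = oIso j :=
          Subtype.ext hπx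
        rw [this]
        exact oIso.symm_apply_apply j)

lemma rmap_lt (M : Finset V) (π : V ≃ Fin (Fintype.card V)) (x y : {x // x ∈ M}) :
    rmap M π x < rmap M π y ↔ π x.1 < π y.1 := by
  simp only [rmap, Equiv.ofBijective_apply]
  exact (OrderIso.lt_iff_lt ((M.image ⇑π).orderIsoOfFin
    (Finset.card_image_of_injective M π.injective)).symm).trans Subtype.mk_lt_mk

lemma rmap_ext (M : Finset V) (σ : Equiv.Perm {x // x ∈ M}) (π : V ≃ Fin (Fintype.card V)) :
    rmap M ((σ.extendDomain (Equiv.refl {x // x ∈ M})).trans π) = σ.trans (rmap M π) := by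
  apply order_unique
  intro x y
  rw [rmap_lt]
  have hval : ∀ z : {x // x ∈ M},
      (σ.extendDomain (Equiv.refl {x // x ∈ M})) z.1 = (σ z).1 := by
    intro z
    have := Equiv.Perm.extendDomain_apply_subtype (f := Equiv.refl {x // x ∈ M}) σ z.2
    simpa using this
  simp only [Equiv.trans_apply, hval]
  rw [← rmap_lt M π (σ x) (σ y)]

lemma fiber_card_const (M : Finset V) (τ τ' : {x // x ∈ M} ≃ Fin M.card) :
    (univ.filter (fun π : V ≃ Fin (Fintype.card V) => rmap M π = τ)).card
      = (univ.filter (fun π : V ≃ Fin (Fintype.card V) => rmap M π = τ')).card := by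
  classical
  refine Finset.card_bij'
    (fun π _ => (Equiv.Perm.extendDomain (τ'.trans τ.symm) (Equiv.refl {x // x ∈ M})).trans π)
    (fun π _ => (Equiv.Perm.extendDomain (τ.trans τ'.symm) (Equiv.refl {x // x ∈ M})).trans π)
    ?_ ?_ ?_ ?_
  · intro π hπ
    simp only [mem_filter, mem_univ, true_and] at hπ ⊢
    rw [rmap_ext, hπ]
    ext x
    simp
  · intro π hπ
    simp only [mem_filter, mem_univ, true_and] at hπ ⊢
    rw [rmap_ext, hπ]
    ext x
    simp
  · intro π _
    rw [← Equiv.trans_assoc, Equiv.Perm.extendDomain_trans]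
    have : (τ.trans τ'.symm).trans (τ'.trans τ.symm) = Equiv.refl _ := by
      ext x; simp
    rw [this, Equiv.Perm.extendDomain_refl]
    rfl
  · intro π _
    rw [← Equiv.trans_assoc, Equiv.Perm.extendDomain_trans]
    have : (τ'.trans τ.symm).trans (τ.trans τ'.symm) = Equiv.refl _ := by
      ext x; simp
    rw [this, Equiv.Perm.extendDomain_refl]
    rfl




def usum (i : V) (B A M : Finset V) (hiM : i ∈ M) (hBM : B ⊆ M) (hAM : A ⊆ M) :
    (({x // x ∈ B} ⊕ Fin 1) ⊕ {x // x ∈ A}) → {x // x ∈ M} :=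
  Sum.elim (Sum.elim (fun x => ⟨x.1, hBM x.2⟩) (fun _ => ⟨i, hiM⟩)) (fun y => ⟨y.1, hAM y.2⟩)

lemma usum_bij (i : V) (B A M : Finset V) (hiM : i ∈ M) (hBM : B ⊆ M) (hAM : A ⊆ M)
    (hiB : i ∉ B) (hiA : i ∉ A) (hBA : Disjoint B A)
    (hmc : B.card + 1 + A.card = M.card) :
    Function.Bijective (usum i B A M hiM hBM hAM) := by
  rw [Fintype.bijective_iff_injective_and_card]
  constructor
  · rintro ((s | s) | y) ((t | t) | z) h <;>
      simp only [usum, Sum.elim_inl, Sum.elim_inr, Subtype.mk.injEq] at h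
    · exact congrArg _ (congrArg _ (Subtype.ext h))
    · exact absurd (show i ∈ B by rw [← h]; exact s.2) hiB
    · exact (Finset.disjoint_left.1 hBA s.2 (show (s : V) ∈ A by rw [h]; exact z.2)).elim
    · exact absurd (show i ∈ B by rw [h]; exact t.2) hiB
    · exact congrArg _ (congrArg _ (Subsingleton.elim s t))
    · exact absurd (show i ∈ A by rw [h]; exact z.2) hiA
    · exact (Finset.disjoint_left.1 hBA t.2 (show (t : V) ∈ A by rw [← h]; exact y.2)).elim
    · exact absurd (show i ∈ A by rw [← h]; exact y.2) hiA
    · exact congrArg _ (Subtype.ext h)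
  · simp only [Fintype.card_sum, Fintype.card_coe, Fintype.card_fin]
    omega

noncomputable def glueEquiv (i : V) (B A M : Finset V) (hiM : i ∈ M) (hBM : B ⊆ M)
    (hAM : A ⊆ M) (hiB : i ∉ B) (hiA : i ∉ A) (hBA : Disjoint B A)
    (hmc : B.card + 1 + A.card = M.card)
    (fg : ({x // x ∈ B} ≃ Fin B.card) × ({x // x ∈ A} ≃ Fin A.card)) :
    {x // x ∈ M} ≃ Fin M.card :=
  ((Equiv.ofBijective _ (usum_bij i B A M hiM hBM hAM hiB hiA hBA hmc)).symm).trans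
    ((((fg.1.sumCongr (Equiv.refl (Fin 1))).sumCongr fg.2).trans
      ((finSumFinEquiv.sumCongr (Equiv.refl (Fin A.card))).trans
        (finSumFinEquiv.trans (finCongr hmc)))))

variable {i : V} {B A M : Finset V} {hiM : i ∈ M} {hBM : B ⊆ M} {hAM : A ⊆ M}
  {hiB : i ∉ B} {hiA : i ∉ A} {hBA : Disjoint B A}
  {hmc : B.card + 1 + A.card = M.card}

lemma glue_val_B (fg) (x : {x // x ∈ M}) (hx : x.1 ∈ B) :
    ((glueEquiv i B A M hiM hBM hAM hiB hiA hBA hmc fg) x : Fin M.card).val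
      = (fg.1 ⟨x.1, hx⟩).val := by
  have h0 : (Equiv.ofBijective _ (usum_bij i B A M hiM hBM hAM hiB hiA hBA hmc)).symm x
      = Sum.inl (Sum.inl ⟨x.1, hx⟩) := by
    rw [Equiv.symm_apply_eq]
    exact Subtype.ext rfl
  simp [glueEquiv, h0]

lemma glue_val_i (fg) :
    ((glueEquiv i B A M hiM hBM hAM hiB hiA hBA hmc fg) ⟨i, hiM⟩ : Fin M.card).val
      = B.card := by
  have h0 : (Equiv.ofBijective _ (usum_bij i B A M hiM hBM hAM hiB hiA hBA hmc)).symm ⟨i, hiM⟩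
      = Sum.inl (Sum.inr 0) := by
    rw [Equiv.symm_apply_eq]
    exact Subtype.ext rfl
  simp [glueEquiv, h0]

lemma glue_val_A (fg) (x : {x // x ∈ M}) (hx : x.1 ∈ A) :
    ((glueEquiv i B A M hiM hBM hAM hiB hiA hBA hmc fg) x : Fin M.card).val
      = B.card + 1 + (fg.2 ⟨x.1, hx⟩).val := by
  have h0 : (Equiv.ofBijective _ (usum_bij i B A M hiM hBM hAM hiB hiA hBA hmc)).symm x
      = Sum.inr ⟨x.1, hx⟩ := by
    rw [Equiv.symm_apply_eq]
    exact Subtype.ext rfl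
  simp [glueEquiv, h0]


end Stmt6Aux


namespace Stmt6AuxB
open Stmt6Aux

variable {V : Type*} [Fintype V] [DecidableEq V]

lemma good_count (i : V) (B A M : Finset V) (hiM : i ∈ M) (hBM : B ⊆ M) (hAM : A ⊆ M)
    (hiB : i ∉ B) (hiA : i ∉ A) (hBA : Disjoint B A)
    (hmc : B.card + 1 + A.card = M.card) (hMsub : ∀ x ∈ M, x = i ∨ x ∈ B ∨ x ∈ A) :
    (univ.filter (fun τ : {x // x ∈ M} ≃ Fin M.card =>
        (∀ x : {x // x ∈ M}, x.1 ∈ B → τ x < τ ⟨i, hiM⟩) ∧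
        (∀ x : {x // x ∈ M}, x.1 ∈ A → τ ⟨i, hiM⟩ < τ x))).card
      = B.card.factorial * A.card.factorial := by
  set p : ({x // x ∈ M} ≃ Fin M.card) → Prop := fun τ =>
    (∀ x : {x // x ∈ M}, x.1 ∈ B → τ x < τ ⟨i, hiM⟩) ∧
    (∀ x : {x // x ∈ M}, x.1 ∈ A → τ ⟨i, hiM⟩ < τ x) with hp
  -- the glue map into good orderings
  have hgood : ∀ fg, p (glueEquiv i B A M hiM hBM hAM hiB hiA hBA hmc fg) := by
    intro fg
    constructor
    · intro x hx
      rw [Fin.lt_def, glue_val_B fg x hx, glue_val_i fg]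
      exact (fg.1 ⟨x.1, hx⟩).isLt
    · intro x hx
      rw [Fin.lt_def, glue_val_A fg x hx, glue_val_i fg]
      omega
  have hbij : Function.Bijective
      (fun fg : ({x // x ∈ B} ≃ Fin B.card) × ({x // x ∈ A} ≃ Fin A.card) =>
        (⟨glueEquiv i B A M hiM hBM hAM hiB hiA hBA hmc fg, hgood fg⟩ : {τ // p τ})) := by
    constructor
    · intro fg fg' h
      have h' := Subtype.ext_iff.1 h
      dsimp only at h'
      have h1 : fg.1 = fg'.1 := by
        apply Equiv.ext
        intro x
        apply Fin.ext
        have e1 := glue_val_B (hiM := hiM) (hBM := hBM) (hAM := hAM) (hiB := hiB)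
          (hiA := hiA) (hBA := hBA) (hmc := hmc) fg ⟨x.1, hBM x.2⟩ x.2
        have e2 := glue_val_B (hiM := hiM) (hBM := hBM) (hAM := hAM) (hiB := hiB)
          (hiA := hiA) (hBA := hBA) (hmc := hmc) fg' ⟨x.1, hBM x.2⟩ x.2
        rw [h'] at e1
        rw [e2] at e1
        simpa using e1.symm
      have h2 : fg.2 = fg'.2 := by
        apply Equiv.ext
        intro x
        apply Fin.ext
        have e1 := glue_val_A (hiM := hiM) (hBM := hBM) (hAM := hAM) (hiB := hiB)
          (hiA := hiA) (hBA := hBA) (hmc := hmc) fg ⟨x.1, hAM x.2⟩ x.2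
        have e2 := glue_val_A (hiM := hiM) (hBM := hBM) (hAM := hAM) (hiB := hiB)
          (hiA := hiA) (hBA := hBA) (hmc := hmc) fg' ⟨x.1, hAM x.2⟩ x.2
        rw [h'] at e1
        rw [e2] at e1
        simp only [Subtype.eta] at e1
        omega
      exact Prod.ext h1 h2
    · rintro ⟨τ, hτ⟩
      -- the value of τ at i is B.card
      have hib : (τ ⟨i, hiM⟩).val = B.card := by
        set t := (τ ⟨i, hiM⟩).val with ht
        have h1 : B.card ≤ t := by
          have hsub : (B.attach.image (fun x => (τ ⟨x.1, hBM x.2⟩).val)) ⊆ Finset.range t := by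
            intro v hv
            obtain ⟨x, _, rfl⟩ := Finset.mem_image.1 hv
            rw [Finset.mem_range]
            exact hτ.1 ⟨x.1, hBM x.2⟩ x.2
          have hinj : Function.Injective (fun x : {x // x ∈ B} => (τ ⟨x.1, hBM x.2⟩).val) := by
            intro x y hxy
            have := τ.injective (Fin.ext hxy)
            have hv := Subtype.ext_iff.mp this
            exact Subtype.ext hv
          have := Finset.card_le_card hsub
          rwa [Finset.card_image_of_injective _ hinj, Finset.card_attach,
            Finset.card_range] at this
        have h2 : A.card ≤ M.card - t - 1 := by
          have hsub : (A.attach.image (fun x => (τ ⟨x.1, hAM x.2⟩).val))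
              ⊆ Finset.Ico (t + 1) M.card := by
            intro v hv
            obtain ⟨x, _, rfl⟩ := Finset.mem_image.1 hv
            rw [Finset.mem_Ico]
            exact ⟨hτ.2 ⟨x.1, hAM x.2⟩ x.2, (τ ⟨x.1, hAM x.2⟩).isLt⟩
          have hinj : Function.Injective (fun x : {x // x ∈ A} => (τ ⟨x.1, hAM x.2⟩).val) := by
            intro x y hxy
            have := τ.injective (Fin.ext hxy)
            have hv := Subtype.ext_iff.mp this
            exact Subtype.ext hv
          have := Finset.card_le_card hsub
          rwa [Finset.card_image_of_injective _ hinj, Finset.card_attach,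
            Nat.card_Ico] at this
        omega
      have hfB : Function.Bijective (fun x : {x // x ∈ B} =>
          (⟨(τ ⟨x.1, hBM x.2⟩).val, by
            have := hτ.1 ⟨x.1, hBM x.2⟩ x.2
            rw [Fin.lt_def, hib] at this
            exact this⟩ : Fin B.card)) := by
        rw [Fintype.bijective_iff_injective_and_card]
        constructor
        · intro x y hxy
          simp only [Fin.mk.injEq] at hxy
          have := τ.injective (Fin.ext hxy)
          have hv := Subtype.ext_iff.mp this
          exact Subtype.ext hv
        · simp [Fintype.card_coe]
      have hgA : Function.Bijective (fun x : {x // x ∈ A} =>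
          (⟨(τ ⟨x.1, hAM x.2⟩).val - (B.card + 1), by
            have h3 := hτ.2 ⟨x.1, hAM x.2⟩ x.2
            rw [Fin.lt_def, hib] at h3
            have h4 := (τ ⟨x.1, hAM x.2⟩).isLt
            omega⟩ : Fin A.card)) := by
        rw [Fintype.bijective_iff_injective_and_card]
        constructor
        · intro x y hxy
          simp only [Fin.mk.injEq] at hxy
          have hx3 := hτ.2 ⟨x.1, hAM x.2⟩ x.2
          have hy3 := hτ.2 ⟨y.1, hAM y.2⟩ y.2
          rw [Fin.lt_def, hib] at hx3 hy3
          have hval : (τ ⟨x.1, hAM x.2⟩).val = (τ ⟨y.1, hAM y.2⟩).val := by omega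
          have := τ.injective (Fin.ext hval)
          have hv := Subtype.ext_iff.mp this
          exact Subtype.ext hv
        · simp [Fintype.card_coe]
      refine ⟨(Equiv.ofBijective _ hfB, Equiv.ofBijective _ hgA), ?_⟩
      apply Subtype.ext
      dsimp only
      apply Equiv.ext
      intro x
      apply Fin.ext
      rcases hMsub x.1 x.2 with hx | hx | hx
      · have hxi : x = ⟨i, hiM⟩ := Subtype.ext hx
        rw [hxi, glue_val_i, hib]
      · rw [glue_val_B _ x hx]
        have hxe : (⟨x.1, hBM hx⟩ : {x // x ∈ M}) = x := Subtype.ext rfl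
        show ((τ ⟨x.1, hBM hx⟩ : Fin M.card)).val = _
        rw [hxe]
      · rw [glue_val_A _ x hx]
        have hxe : (⟨x.1, hAM hx⟩ : {x // x ∈ M}) = x := Subtype.ext rfl
        show B.card + 1 + ((τ ⟨x.1, hAM hx⟩ : Fin M.card).val - (B.card + 1)) = _
        have h3 := hτ.2 ⟨x.1, hAM hx⟩ hx
        rw [Fin.lt_def, hib] at h3
        rw [hxe] at h3 ⊢
        omega
  calc (univ.filter p).card
      = Fintype.card {τ // p τ} := by
        classical
        rw [Fintype.card_subtype]
    _ = Fintype.card (({x // x ∈ B} ≃ Fin B.card) × ({x // x ∈ A} ≃ Fin A.card)) :=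
        (Fintype.card_of_bijective hbij).symm
    _ = B.card.factorial * A.card.factorial := by
        rw [Fintype.card_prod,
          Fintype.card_equiv (Fintype.equivFinOfCardEq (Fintype.card_coe B)),
          Fintype.card_equiv (Fintype.equivFinOfCardEq (Fintype.card_coe A)),
          Fintype.card_coe, Fintype.card_coe]

end Stmt6AuxB

namespace Stmt6Aux
variable {V : Type*} [Fintype V] [DecidableEq V]

lemma count_key (i : V) (B A : Finset V) (hiB : i ∉ B) (hiA : i ∉ A) (hBA : Disjoint B A) :
    (univ.filter (fun π : V ≃ Fin (Fintype.card V) =>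
        (∀ x ∈ B, π x < π i) ∧ (∀ y ∈ A, π i < π y))).card
      * (insert i (B ∪ A)).card.factorial
    = (Fintype.card V).factorial * B.card.factorial * A.card.factorial := by
  classical
  set M := insert i (B ∪ A) with hM
  have hiM : i ∈ M := mem_insert_self _ _
  have hBM : B ⊆ M := fun x hx => mem_insert_of_mem (mem_union_left _ hx)
  have hAM : A ⊆ M := fun x hx => mem_insert_of_mem (mem_union_right _ hx)
  have hMsub : ∀ x ∈ M, x = i ∨ x ∈ B ∨ x ∈ A := by
    intro x hx
    rcases mem_insert.1 hx with h | h
    · exact Or.inl h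
    · exact Or.inr (mem_union.1 h)
  have hmc : B.card + 1 + A.card = M.card := by
    rw [hM, card_insert_of_notMem (by simp [hiB, hiA]),
      card_union_of_disjoint hBA]
    omega
  set q : ({x // x ∈ M} ≃ Fin M.card) → Prop := fun τ =>
    (∀ x : {x // x ∈ M}, x.1 ∈ B → τ x < τ ⟨i, hiM⟩) ∧
    (∀ x : {x // x ∈ M}, x.1 ∈ A → τ ⟨i, hiM⟩ < τ x) with hq
  have hequiv : ∀ π : V ≃ Fin (Fintype.card V),
      ((∀ x ∈ B, π x < π i) ∧ (∀ y ∈ A, π i < π y)) ↔ q (rmap M π) := by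
    intro π
    constructor
    · rintro ⟨h1, h2⟩
      exact ⟨fun x hx => (rmap_lt M π x ⟨i, hiM⟩).2 (h1 x.1 hx),
             fun x hx => (rmap_lt M π ⟨i, hiM⟩ x).2 (h2 x.1 hx)⟩
    · rintro ⟨h1, h2⟩
      exact ⟨fun x hx => (rmap_lt M π ⟨x, hBM hx⟩ ⟨i, hiM⟩).1 (h1 ⟨x, hBM hx⟩ hx),
             fun y hy => (rmap_lt M π ⟨i, hiM⟩ ⟨y, hAM hy⟩).1 (h2 ⟨y, hAM hy⟩ hy)⟩
  set τ₀ : {x // x ∈ M} ≃ Fin M.card := Fintype.equivFinOfCardEq (Fintype.card_coe M) with hτ₀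
  set F := (univ.filter (fun π : V ≃ Fin (Fintype.card V) => rmap M π = τ₀)).card with hF
  have hfib : ∀ τ, (univ.filter (fun π : V ≃ Fin (Fintype.card V) => rmap M π = τ)).card = F :=
    fun τ => fiber_card_const M τ τ₀
  have htot : (Fintype.card V).factorial = M.card.factorial * F := by
    have h1 : (univ : Finset (V ≃ Fin (Fintype.card V))).card
        = ∑ τ : {x // x ∈ M} ≃ Fin M.card,
            (univ.filter (fun π : V ≃ Fin (Fintype.card V) => rmap M π = τ)).card :=
      Finset.card_eq_sum_card_fiberwise (fun π _ => mem_univ _)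
    rw [Finset.card_univ, Fintype.card_equiv (Fintype.equivFin V)] at h1
    rw [h1, Finset.sum_congr rfl (fun τ _ => hfib τ), Finset.sum_const, Finset.card_univ,
      Fintype.card_equiv (Fintype.equivFinOfCardEq (Fintype.card_coe M)), Fintype.card_coe,
      smul_eq_mul]
  have hN : (univ.filter (fun π : V ≃ Fin (Fintype.card V) =>
      (∀ x ∈ B, π x < π i) ∧ (∀ y ∈ A, π i < π y))).card
      = (univ.filter q).card * F := by
    have h2 : (univ.filter (fun π : V ≃ Fin (Fintype.card V) =>
        (∀ x ∈ B, π x < π i) ∧ (∀ y ∈ A, π i < π y))).card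
        = ∑ τ ∈ univ.filter q,
          ((univ.filter (fun π : V ≃ Fin (Fintype.card V) =>
            (∀ x ∈ B, π x < π i) ∧ (∀ y ∈ A, π i < π y))).filter
              (fun π => rmap M π = τ)).card := by
      apply Finset.card_eq_sum_card_fiberwise
      intro π hπ
      rw [Finset.mem_coe, mem_filter] at hπ
      exact mem_filter.2 ⟨mem_univ _, (hequiv π).1 hπ.2⟩
    have h3 : ∀ τ ∈ univ.filter q,
        ((univ.filter (fun π : V ≃ Fin (Fintype.card V) =>
          (∀ x ∈ B, π x < π i) ∧ (∀ y ∈ A, π i < π y))).filter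
            (fun π => rmap M π = τ)).card = F := by
      intro τ hτ
      have hτq : q τ := (mem_filter.1 hτ).2
      have heq : (univ.filter (fun π : V ≃ Fin (Fintype.card V) =>
          (∀ x ∈ B, π x < π i) ∧ (∀ y ∈ A, π i < π y))).filter
            (fun π => rmap M π = τ)
          = univ.filter (fun π : V ≃ Fin (Fintype.card V) => rmap M π = τ) := by
        ext π
        simp only [mem_filter, mem_univ, true_and]
        constructor
        · rintro ⟨_, h⟩; exact h
        · intro h
          refine ⟨(hequiv π).2 ?_, h⟩
          rw [h]
          exact hτq
      rw [heq]
      exact hfib τ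
    rw [h2, Finset.sum_congr rfl h3, Finset.sum_const, smul_eq_mul]
  have hG : (univ.filter q).card = B.card.factorial * A.card.factorial :=
    Stmt6AuxB.good_count i B A M hiM hBM hAM hiB hiA hBA hmc hMsub
  rw [hN, hG, htot]
  ring

end Stmt6Aux

section TreePart

variable {V : Type*} [Fintype V] [DecidableEq V]

lemma fixed_eq_root (T : ReferralTree V) {j : V} (h : T.parent j = j) : j = T.root := by
  obtain ⟨k, hk⟩ := T.reaches_root j
  rwa [Function.iterate_fixed h k] at hk

lemma periodic_eq_root (T : ReferralTree V) {j : V} {k : ℕ} (hk : 0 < k)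
    (h : T.parent^[k] j = j) : j = T.root := by
  obtain ⟨K, hK⟩ := T.reaches_root j
  have hmul : ∀ s, T.parent^[k * s] j = j := by
    intro s
    induction s with
    | zero => simp
    | succ s ih => rw [Nat.mul_succ, Function.iterate_add_apply, h, ih]
  have h2 : T.parent^[k * K - K + K] j = j := by
    rw [Nat.sub_add_cancel (Nat.le_mul_of_pos_left K hk)]
    exact hmul K
  rw [Function.iterate_add_apply, hK, Function.iterate_fixed T.parent_root] at h2
  exact h2.symm

lemma mem_anc_iff (T : ReferralTree V) {x j : V} :
    x ∈ T.anc j ↔ x ≠ j ∧ ∃ k, T.parent^[k] j = x := by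
  simp [ReferralTree.anc]

lemma anc_subset_parent (T : ReferralTree V) (j : V) :
    T.anc j ⊆ insert (T.parent j) (T.anc (T.parent j)) := by
  intro x hx
  rw [mem_anc_iff] at hx
  obtain ⟨hne, k, hk⟩ := hx
  match k, hk with
  | 0, hk => exact absurd hk.symm (by simpa using hne)
  | k + 1, hk =>
    rw [Function.iterate_succ_apply] at hk
    by_cases hxp : x = T.parent j
    · exact mem_insert.2 (Or.inl hxp)
    · exact mem_insert_of_mem (mem_anc_iff T |>.2 ⟨hxp, k, hk⟩)

lemma trimmed_anc {T : ReferralTree V} {C : Finset V} (hC : T.Trimmed C) :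
    ∀ j ∈ C, T.anc j ⊆ C := by
  have h : T.trimN C = C := hC
  exact Finset.filter_eq_self.1 h

lemma root_mem {T : ReferralTree V} {C : Finset V} (hC : T.Trimmed C) {i : V} (hi : i ∈ C) :
    T.root ∈ C := by
  by_cases h : i = T.root
  · rwa [h] at hi
  · exact trimmed_anc hC i hi
      ((mem_anc_iff T).2 ⟨fun hr => h hr.symm, T.reaches_root i⟩)

lemma mem_adjSet_iff (T : ReferralTree V) {C : Finset V} {x : V} :
    x ∈ T.adjSet C ↔ x ∉ C ∧ ∃ j ∈ C, T.Adj x j := by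
  simp [ReferralTree.adjSet]

lemma trim_eq_iff (T : ReferralTree V) {C : Finset V} (hC : T.Trimmed C) {i : V}
    (hi : i ∈ C) (D : Finset V) :
    T.trimN D = C ↔ C ⊆ D ∧ ∀ x ∈ T.adjSet C, x ∉ D := by
  have hroot : T.root ∈ C := root_mem hC hi
  constructor
  · intro h
    have hsub : C ⊆ D := h ▸ Finset.filter_subset _ _
    refine ⟨hsub, fun x hx hxD => ?_⟩
    rw [mem_adjSet_iff] at hx
    obtain ⟨hxC, j, hjC, hne, hadj⟩ := hx
    rcases hadj with hpx | hpj
    · have hancx : T.anc x ⊆ C := by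
        intro y hy
        rcases mem_insert.1 (anc_subset_parent T x hy) with h1 | h1
        · rw [h1, hpx]; exact hjC
        · rw [hpx] at h1
          exact trimmed_anc hC j hjC h1
      have hmem : x ∈ T.trimN D := mem_filter.2 ⟨hxD, hancx.trans hsub⟩
      rw [h] at hmem
      exact hxC hmem
    · have hxanc : x ∈ T.anc j := (mem_anc_iff T).2 ⟨hne, 1, by simpa using hpj⟩
      exact hxC (trimmed_anc hC j hjC hxanc)
  · rintro ⟨h1, h2⟩
    apply Finset.Subset.antisymm
    · intro j hj
      obtain ⟨hjD, hjanc⟩ := mem_filter.1 hj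
      by_contra hjC
      have hex : ∃ k, T.parent^[k] j ∈ C := by
        obtain ⟨K, hK⟩ := T.reaches_root j
        exact ⟨K, by rw [hK]; exact hroot⟩
      have hk0 : T.parent^[Nat.find hex] j ∈ C := Nat.find_spec hex
      have hk0pos : 0 < Nat.find hex := by
        rcases Nat.eq_zero_or_pos (Nat.find hex) with h0 | h0
        · rw [h0] at hk0
          exact absurd (by simpa using hk0) hjC
        · exact h0
      set x := T.parent^[Nat.find hex - 1] j with hxdef
      have hxC : x ∉ C := Nat.find_min hex (by omega)
      have hpxC : T.parent x ∈ C := by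
        have he : T.parent^[Nat.find hex - 1 + 1] j
            = T.parent (T.parent^[Nat.find hex - 1] j) :=
          Function.iterate_succ_apply' _ _ _
        have he2 : Nat.find hex - 1 + 1 = Nat.find hex := by omega
        rw [he2] at he
        rw [hxdef, ← he]
        exact hk0
      have hxD : x ∈ D := by
        rcases Nat.eq_zero_or_pos (Nat.find hex - 1) with h0 | hpos
        · rw [hxdef, h0]
          simpa using hjD
        · have hxj : x ≠ j := by
            intro hxe
            have hper := periodic_eq_root T hpos (hxdef ▸ hxe)
            exact hjC (hper ▸ hroot)
          exact hjanc ((mem_anc_iff T).2 ⟨hxj, _, rfl⟩)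
      have hxne : x ≠ T.parent x := by
        intro hxp
        exact hxC ((fixed_eq_root T hxp.symm) ▸ hroot)
      have hxadj : x ∈ T.adjSet C :=
        (mem_adjSet_iff T).2 ⟨hxC, T.parent x, hpxC, hxne, Or.inl rfl⟩
      exact h2 x hxadj hxD
    · intro j hj
      exact mem_filter.2 ⟨h1 hj, (trimmed_anc hC j hj).trans h1⟩

lemma cond_iff (T : ReferralTree V) {C : Finset V} (hC : T.Trimmed C) {i : V} (hi : i ∈ C)
    (π : V ≃ Fin (Fintype.card V)) :
    insert i (precSet π i) ∈ T.sameTrim C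
      ↔ (∀ x ∈ C.erase i, π x < π i) ∧ (∀ y ∈ T.adjSet C, π i < π y) := by
  have hCC : T.trimN C = C := hC
  rw [ReferralTree.sameTrim, mem_filter, hCC]
  simp only [mem_univ, true_and]
  rw [trim_eq_iff T hC hi]
  constructor
  · rintro ⟨h1, h2⟩
    constructor
    · intro x hx
      obtain ⟨hxi, hxC⟩ := mem_erase.1 hx
      rcases mem_insert.1 (h1 hxC) with h | h
      · exact absurd h hxi
      · exact (mem_filter.1 h).2
    · intro y hy
      have hyD := h2 y hy
      have hyC : y ∉ C := ((mem_adjSet_iff T).1 hy).1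
      have hyi : y ≠ i := fun h => hyC (h ▸ hi)
      have hy2 : ¬ π y < π i := fun hlt =>
        hyD (mem_insert_of_mem (mem_filter.2 ⟨mem_univ _, hlt⟩))
      have hne : π y ≠ π i := fun h => hyi (π.injective h)
      rcases lt_trichotomy (π i) (π y) with h | h | h
      · exact h
      · exact absurd h.symm hne
      · exact absurd h hy2
  · rintro ⟨h1, h2⟩
    constructor
    · intro x hxC
      by_cases hxi : x = i
      · rw [hxi]; exact mem_insert_self _ _
      · exact mem_insert_of_mem (mem_filter.2 ⟨mem_univ _, h1 x (mem_erase.2 ⟨hxi, hxC⟩)⟩)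
    · intro y hy hyD
      have hyC : y ∉ C := ((mem_adjSet_iff T).1 hy).1
      have hyi : y ≠ i := fun h => hyC (h ▸ hi)
      rcases mem_insert.1 hyD with h | h
      · exact hyi h
      · exact absurd ((mem_filter.1 h).2) (not_lt.2 (le_of_lt (h2 y hy)))

end TreePart

end Stmt6AuxSection

/-- For `C ∈ Trimmed(T)` with `i ∈ C`, the number of permutations
`π` of `N(T)` with `C_i^π ∪ {i} ∈ SameTrim(C,T)` equals
`n! · |adj(C,T)|! · (|C|−1)! / |C ∪ adj(C,T)|!`. -/
theorem stmt6 {V : Type*} [Fintype V] [DecidableEq V] (T : ReferralTree V)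
    (i : V) (C : Finset V) (hC : T.Trimmed C) (hi : i ∈ C) :
    (((Finset.univ : Finset (V ≃ Fin (Fintype.card V))).filter
        (fun π => insert i (precSet π i) ∈ T.sameTrim C)).card : ℝ)
      = ((Fintype.card V).factorial * (T.adjSet C).card.factorial *
            (C.card - 1).factorial : ℝ) /
          ((C ∪ T.adjSet C).card.factorial : ℝ) := by
  classical
  have hfil : (Finset.univ.filter
      (fun π : V ≃ Fin (Fintype.card V) => insert i (precSet π i) ∈ T.sameTrim C))
      = Finset.univ.filter (fun π : V ≃ Fin (Fintype.card V) =>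
          (∀ x ∈ C.erase i, π x < π i) ∧ (∀ y ∈ T.adjSet C, π i < π y)) :=
    Finset.filter_congr (fun π _ => cond_iff T hC hi π)
  rw [hfil]
  have hiB : i ∉ C.erase i := Finset.notMem_erase i C
  have hiA : i ∉ T.adjSet C := fun h => ((mem_adjSet_iff T).1 h).1 hi
  have hBA : Disjoint (C.erase i) (T.adjSet C) :=
    Finset.disjoint_left.2 fun x hx hxA =>
      ((mem_adjSet_iff T).1 hxA).1 (Finset.mem_of_mem_erase hx)
  have key := Stmt6Aux.count_key i (C.erase i) (T.adjSet C) hiB hiA hBA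
  have hM : insert i (C.erase i ∪ T.adjSet C) = C ∪ T.adjSet C := by
    ext x
    simp only [Finset.mem_insert, Finset.mem_union, Finset.mem_erase]
    constructor
    · rintro (rfl | (⟨_, h⟩ | h))
      · exact Or.inl hi
      · exact Or.inl h
      · exact Or.inr h
    · rintro (h | h)
      · by_cases hxi : x = i
        · exact Or.inl hxi
        · exact Or.inr (Or.inl ⟨hxi, h⟩)
      · exact Or.inr (Or.inr h)
  rw [hM] at key
  have hBcard : (C.erase i).card = C.card - 1 := Finset.card_erase_of_mem hi
  rw [hBcard] at key
  rw [eq_div_iff (by exact_mod_cast Nat.factorial_ne_zero _)]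
  have key2 := key.trans (Nat.mul_right_comm _ _ _)
  exact_mod_cast key2
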